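/- Let ρ be a tolerance on a lattice L and assume the blocks of ρ form a lattice L/ρ where A ∨ B is the unique block containing {a ∨ b : a ∈ A, b ∈ B} and dually for meet. Then the set K = {(A, x) : A ∈ L/ρ, x ∈ A}, with operations (A,x) ∨ (B,y) = (A ∨ B, x ∨ y) and (A,x) ∧ (B,y) = (A ∧ B, x ∧ y), is a lattice. (In particular, the operations are well defined: x ∨ y ∈ A ∨ B and x ∧ y ∈ A ∧ B.) -/

import Mathlib

variable {L : Type*}

def IsTolerance [Lattice L] (ρ : L → L → Prop) : Prop :=
  (∀ x, ρ x x) ∧ (∀ x y, ρ x y → ρ y x) ∧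
  (∀ a b c d, ρ a b → ρ c d → ρ (a ⊔ c) (b ⊔ d)) ∧
  (∀ a b c d, ρ a b → ρ c d → ρ (a ⊓ c) (b ⊓ d))

def IsCongruence [Lattice L] (ρ : L → L → Prop) : Prop :=
  IsTolerance ρ ∧ ∀ x y z, ρ x y → ρ y z → ρ x z

def IsBlock [Lattice L] (ρ : L → L → Prop) (A : Set L) : Prop :=
  (∀ x ∈ A, ∀ y ∈ A, ρ x y) ∧
  ∀ B : Set L, A ⊆ B → (∀ x ∈ B, ∀ y ∈ B, ρ x y) → B = A

theorem stmt4 [Lattice L] (ρ : L → L → Prop) (hρ : IsTolerance ρ)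
    (instB : Lattice {A : Set L // IsBlock ρ A})
    (hsup : ∀ A B : {A : Set L // IsBlock ρ A}, Set.image2 (· ⊔ ·) A.1 B.1 ⊆ (A ⊔ B).1)
    (hinf : ∀ A B : {A : Set L // IsBlock ρ A}, Set.image2 (· ⊓ ·) A.1 B.1 ⊆ (A ⊓ B).1) :
    (∀ (A B : {A : Set L // IsBlock ρ A}) (x y : L), x ∈ A.1 → y ∈ B.1 →
      x ⊔ y ∈ (A ⊔ B).1 ∧ x ⊓ y ∈ (A ⊓ B).1) ∧
    ∃ _instK : Lattice {p : {A : Set L // IsBlock ρ A} × L // p.2 ∈ p.1.1},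
      ∀ p q : {p : {A : Set L // IsBlock ρ A} × L // p.2 ∈ p.1.1},
        ((p ⊔ q).1.1 = p.1.1 ⊔ q.1.1 ∧ (p ⊔ q).1.2 = p.1.2 ⊔ q.1.2) ∧
        ((p ⊓ q).1.1 = p.1.1 ⊓ q.1.1 ∧ (p ⊓ q).1.2 = p.1.2 ⊓ q.1.2) := by
  refine ⟨fun A B x y hx hy =>
    ⟨hsup A B ⟨x, hx, y, hy, rfl⟩, hinf A B ⟨x, hx, y, hy, rfl⟩⟩, ?_⟩
  letI supK : Max {p : {A : Set L // IsBlock ρ A} × L // p.2 ∈ p.1.1} :=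
    ⟨fun p q => ⟨(p.1.1 ⊔ q.1.1, p.1.2 ⊔ q.1.2),
      hsup p.1.1 q.1.1 ⟨p.1.2, p.2, q.1.2, q.2, rfl⟩⟩⟩
  letI infK : Min {p : {A : Set L // IsBlock ρ A} × L // p.2 ∈ p.1.1} :=
    ⟨fun p q => ⟨(p.1.1 ⊓ q.1.1, p.1.2 ⊓ q.1.2),
      hinf p.1.1 q.1.1 ⟨p.1.2, p.2, q.1.2, q.2, rfl⟩⟩⟩
  letI leK : LE {p : {A : Set L // IsBlock ρ A} × L // p.2 ∈ p.1.1} :=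
    ⟨fun p q => @LE.le _
      (Prod.instLattice {A : Set L // IsBlock ρ A} L).toSemilatticeInf.toPreorder.toLE p.1 q.1⟩
  letI ltK : LT {p : {A : Set L // IsBlock ρ A} × L // p.2 ∈ p.1.1} :=
    ⟨fun p q => @LT.lt _
      (Prod.instLattice {A : Set L // IsBlock ρ A} L).toSemilatticeInf.toPreorder.toLT p.1 q.1⟩
  letI instK : Lattice {p : {A : Set L // IsBlock ρ A} × L // p.2 ∈ p.1.1} :=
    Function.Injective.lattice (α := {p : {A : Set L // IsBlock ρ A} × L // p.2 ∈ p.1.1})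
      (β := {A : Set L // IsBlock ρ A} × L) Subtype.val Subtype.val_injective
      Iff.rfl Iff.rfl (fun _ _ => rfl) (fun _ _ => rfl)
  exact ⟨instK, fun p q => ⟨⟨rfl, rfl⟩, ⟨rfl, rfl⟩⟩⟩
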